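/- For integers n ≥ 1 and 0 ≤ d ≤ n-1, the alternating sum ∑_{m=d+1}^{n} ((-1)^{m-1}/m) · C(n - d - 1, m - 1 - d) equals (-1)^d / (n · C(n-1, d)). -/

import Mathlib

open Finset

lemma auxS (k : ℕ) : ∀ a : ℕ,
    ∑ j ∈ range (k + 1), (-1 : ℚ) ^ j * (k.choose j : ℚ) / ((j : ℚ) + a + 1)
      = (k.factorial : ℚ) * (a.factorial : ℚ) / ((a + k + 1).factorial : ℚ) := by
  induction k with
  | zero =>
    intro a
    simp [Nat.factorial_succ]
    field_simp
  | succ k ih =>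
    intro a
    rw [Finset.sum_range_succ']
    have split : ∀ i ∈ range (k + 1),
        (-1 : ℚ) ^ (i + 1) * (((k + 1).choose (i + 1) : ℕ) : ℚ) / (((i + 1 : ℕ) : ℚ) + a + 1)
          = -((-1 : ℚ) ^ i * (k.choose i : ℚ) / ((i : ℚ) + (a + 1 : ℕ) + 1))
            + (-1 : ℚ) ^ (i + 1) * (k.choose (i + 1) : ℚ) / ((i : ℚ) + 1 + a + 1) := by
      intro i _
      rw [Nat.choose_succ_succ]
      push_cast
      ring
    rw [Finset.sum_congr rfl split, Finset.sum_add_distrib]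
    have h2 : ∑ i ∈ range (k + 1),
        (-1 : ℚ) ^ (i + 1) * (k.choose (i + 1) : ℚ) / ((i : ℚ) + 1 + a + 1)
          = (∑ j ∈ range (k + 1), (-1 : ℚ) ^ j * (k.choose j : ℚ) / ((j : ℚ) + a + 1))
            - 1 / (a + 1) := by
      rw [Finset.sum_range_succ'
        (fun j => (-1 : ℚ) ^ j * (k.choose j : ℚ) / ((j : ℚ) + a + 1))]
      rw [Finset.sum_range_succ]
      push_cast
      simp [Nat.choose_succ_self]
    rw [h2, ih a]
    have hsum : ∑ i ∈ range (k + 1),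
        -((-1 : ℚ) ^ i * (k.choose i : ℚ) / ((i : ℚ) + (a + 1 : ℕ) + 1))
          = -((k.factorial : ℚ) * ((a + 1).factorial : ℚ) / (((a + 1) + k + 1).factorial : ℚ)) := by
      rw [← ih (a + 1)]
      rw [Finset.sum_neg_distrib]
    rw [hsum]
    simp only [Nat.choose_zero_right]
    have e1 : ((a + 1) + k + 1).factorial = (a + k + 2) * (a + k + 1).factorial := by
      have : (a + 1) + k + 1 = (a + k + 1) + 1 := by ring
      rw [this, Nat.factorial_succ]
    have e2 : (a + (k + 1) + 1).factorial = (a + k + 2) * (a + k + 1).factorial := by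
      have : a + (k + 1) + 1 = (a + k + 1) + 1 := by ring
      rw [this, Nat.factorial_succ]
    have e3 : (k + 1).factorial = (k + 1) * k.factorial := Nat.factorial_succ k
    have e4 : (a + 1).factorial = (a + 1) * a.factorial := Nat.factorial_succ a
    rw [e1, e2, e3, e4]
    have hf1 : ((a + k + 1).factorial : ℚ) ≠ 0 := Nat.cast_ne_zero.2 (Nat.factorial_ne_zero _)
    have hf2 : ((a : ℚ) + 1) ≠ 0 := by positivity
    have hf3 : ((a : ℚ) + k + 2) ≠ 0 := by positivity
    push_cast
    field_simp
    ring

/-- For integers `n ≥ 1` and `0 ≤ d ≤ n - 1`, the alternating sum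
`∑_{m=d+1}^{n} ((-1)^{m-1}/m) · C(n-d-1, m-1-d)` equals `(-1)^d / (n · C(n-1, d))`. -/
theorem alternating_sum_choose (n d : ℕ) (hn : 1 ≤ n) (hd : d ≤ n - 1) :
    ∑ m ∈ Finset.Icc (d + 1) n,
        ((-1 : ℚ) ^ (m - 1) / m) * ((n - d - 1).choose (m - 1 - d) : ℚ)
      = (-1 : ℚ) ^ d / (n * ((n - 1).choose d : ℚ)) := by
  obtain ⟨k, rfl⟩ : ∃ k, n = d + k + 1 := ⟨n - d - 1, by omega⟩
  rw [← Finset.Ico_add_one_right_eq_Icc, Finset.sum_Ico_eq_sum_range]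
  have hr : d + k + 1 + 1 - (d + 1) = k + 1 := by omega
  rw [hr]
  have hterm : ∀ i ∈ range (k + 1),
      ((-1 : ℚ) ^ (d + 1 + i - 1) / ((d + 1 + i : ℕ) : ℚ))
          * ((d + k + 1 - d - 1).choose (d + 1 + i - 1 - d) : ℚ)
        = (-1 : ℚ) ^ d * ((-1 : ℚ) ^ i * (k.choose i : ℚ) / ((i : ℚ) + d + 1)) := by
    intro i _
    have h1 : d + 1 + i - 1 = d + i := by omega
    have h2 : d + k + 1 - d - 1 = k := by omega
    have h3 : d + i - d = i := by omega
    rw [h1, h2, h3, pow_add]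
    push_cast
    ring
  rw [Finset.sum_congr rfl hterm, ← Finset.mul_sum, auxS k d]
  have h4 : d + k + 1 - 1 = d + k := by omega
  rw [h4]
  have h5 : (d + k).choose d * d.factorial * k.factorial = (d + k).factorial := by
    have := Nat.choose_mul_factorial_mul_factorial (Nat.le_add_right d k)
    simpa using this
  have h6 : (d + k + 1).factorial = (d + k + 1) * (d + k).factorial := Nat.factorial_succ _
  have hne1 : ((d + k).choose d : ℚ) ≠ 0 :=
    Nat.cast_ne_zero.2 (Nat.choose_pos (Nat.le_add_right d k)).ne'
  have hne2 : ((d + k + 1 : ℕ) : ℚ) ≠ 0 := Nat.cast_ne_zero.2 (by omega)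
  have hne3 : ((d + k).factorial : ℚ) ≠ 0 := Nat.cast_ne_zero.2 (Nat.factorial_ne_zero _)
  have h5q : ((d + k).choose d : ℚ) * d.factorial * k.factorial = (d + k).factorial := by
    exact_mod_cast congrArg (Nat.cast : ℕ → ℚ) h5
  rw [h6]
  push_cast
  field_simp
  linear_combination h5q
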